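/- Fix an integer D ≥ 2 and let λ_D(t) = ((D·r(t)² + r(2t))² − 4·r(t)²)/((D+3)(D²−1)). Then λ_D(t) → 0 as t → +∞, and consequently the channel coefficients satisfy α_D(t) = (1/(D+1) − λ_D(t))⁻¹ → D+1 and β_D(t) = (1/(D+1) + D·λ_D(t))⁻¹ → D+1 as t → +∞. (In the long-time limit the Hamiltonian-driven channel converges to the unitary 2-design channel.) -/

import Mathlib

set_option maxHeartbeats 1000000

open Real Filter Topology MeasureTheory intervalIntegral
open scoped FourierTransform

-- Wallis: ∫ sin^(2k) over [-π/2, π/2]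
lemma S_even (k : ℕ) :
    (∫ x in (-(π/2))..(π/2), Real.sin x ^ (2*k)) =
      π * (2*k).factorial / (4^k * (k.factorial)^2) := by
  induction k with
  | zero => simp
  | succ k ih =>
    have h := integral_sin_pow (a := -(π/2)) (b := π/2) (2*k)
    rw [Real.cos_pi_div_two, Real.cos_neg, Real.cos_pi_div_two] at h
    have h2k2 : 2 * (k+1) = 2*k + 2 := by ring
    rw [h2k2, h, ih]
    have hf : (k.factorial : ℝ) ≠ 0 := Nat.cast_ne_zero.mpr k.factorial_ne_zero
    have h4 : (4:ℝ)^k ≠ 0 := by positivity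
    have e1 : (2*k+2).factorial = (2*k+2) * ((2*k+1) * (2*k).factorial) := by
      rw [show 2*k+2 = (2*k+1)+1 by ring, Nat.factorial_succ, Nat.factorial_succ]
    have e2 : (k+1).factorial = (k+1) * k.factorial := Nat.factorial_succ k
    rw [e1, e2]
    push_cast
    field_simp
    ring

lemma moment (k : ℕ) :
    (∫ x in (-1:ℝ)..1, x ^ (2*k) * Real.sqrt (1 - x^2)) =
      π * (2*k).factorial / (2 * 4^k * k.factorial * (k+1).factorial) := by
  have hsub : (∫ x in (-(π/2))..(π/2), Real.cos x • ((Real.sin x) ^ (2*k) *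
      Real.sqrt (1 - Real.sin x ^ 2))) = ∫ u in (-1:ℝ)..1, u ^ (2*k) * Real.sqrt (1 - u^2) := by
    have := intervalIntegral.integral_comp_smul_deriv (a := -(π/2)) (b := π/2)
      (f := Real.sin) (f' := Real.cos)
      (g := fun u => u ^ (2*k) * Real.sqrt (1 - u^2))
      (fun x _ => Real.hasDerivAt_sin x) Real.continuousOn_cos
      (by fun_prop)
    simpa using this
  have hcong : (∫ x in (-(π/2))..(π/2), Real.cos x • ((Real.sin x) ^ (2*k) *
      Real.sqrt (1 - Real.sin x ^ 2))) =
      ∫ x in (-(π/2))..(π/2), (Real.sin x ^ (2*k) - Real.sin x ^ (2*k+2)) := by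
    apply intervalIntegral.integral_congr
    intro x hx
    rw [Set.uIcc_of_le (by linarith [Real.pi_pos] : -(π/2) ≤ π/2)] at hx
    have hc : 0 ≤ Real.cos x := Real.cos_nonneg_of_mem_Icc (by simpa using hx)
    have h1 : 1 - Real.sin x ^ 2 = Real.cos x ^ 2 := by
      nlinarith [Real.sin_sq_add_cos_sq x]
    simp only [h1, Real.sqrt_sq hc]
    have : Real.sin x ^ (2*k+2) = Real.sin x ^ (2*k) * Real.sin x ^ 2 := by ring
    rw [this]
    have hcs : Real.cos x ^ 2 = 1 - Real.sin x ^ 2 := by rw [Real.cos_sq']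
    simp only [smul_eq_mul]
    calc Real.cos x * (Real.sin x ^ (2*k) * Real.cos x)
        = Real.sin x ^ (2*k) * Real.cos x ^ 2 := by ring
      _ = Real.sin x ^ (2*k) - Real.sin x ^ (2*k) * Real.sin x ^ 2 := by rw [hcs]; ring
  have hsplit : (∫ x in (-(π/2))..(π/2), (Real.sin x ^ (2*k) - Real.sin x ^ (2*k+2))) =
      (∫ x in (-(π/2))..(π/2), Real.sin x ^ (2*k)) -
      ∫ x in (-(π/2))..(π/2), Real.sin x ^ (2*k+2) := by
    apply intervalIntegral.integral_sub <;> apply Continuous.intervalIntegrable <;> fun_prop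
  have h2 : 2*k+2 = 2*(k+1) := by ring
  rw [← hsub, hcong, hsplit, h2, S_even, S_even]
  have hf : (k.factorial : ℝ) ≠ 0 := Nat.cast_ne_zero.mpr k.factorial_ne_zero
  have hf1 : ((k+1).factorial : ℝ) ≠ 0 := Nat.cast_ne_zero.mpr (k+1).factorial_ne_zero
  have h4 : (4:ℝ)^k ≠ 0 := by positivity
  have e1 : ((2*(k+1)).factorial:ℝ) = (2*k+2) * ((2*k+1) * (2*k).factorial) := by
    rw [show 2*(k+1) = (2*k+1)+1 by ring, Nat.factorial_succ, Nat.factorial_succ]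
    push_cast; ring
  have e2 : ((k+1).factorial:ℝ) = (k+1) * k.factorial := by rw [Nat.factorial_succ]; push_cast; ring
  rw [e1, e2]
  field_simp
  ring

/-- `r t = ∑_{k=0}^∞ (−1)^k t^{2k}/(k!·(k+1)!) = J₁(2t)/t`. -/
noncomputable def besselR (t : ℝ) : ℝ :=
  ∑' k : ℕ, (-1) ^ k * t ^ (2 * k) / (k.factorial * (k + 1).factorial)

lemma besselR_eq_integral (t : ℝ) :
    besselR t = (2/π) * ∫ x in (-1:ℝ)..1, Real.cos (2*t*x) * Real.sqrt (1 - x^2) := by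
  have hpi : (π:ℝ) ≠ 0 := Real.pi_ne_zero
  set F : ℕ → ℝ → ℝ :=
    fun k x => ((-1)^k * (2*t*x)^(2*k) / (2*k).factorial) * Real.sqrt (1 - x^2) with hF
  have hFc : ∀ k, Continuous (F k) := by intro k; fun_prop
  have hInt : ∀ k, Integrable (F k) (volume.restrict (Set.Ioc (-1:ℝ) 1)) := fun k =>
    (hFc k).integrableOn_Ioc
  -- pointwise bound
  have hbd : ∀ k, ∀ x ∈ Set.Ioc (-1:ℝ) 1, ‖F k x‖ ≤ (2*|t|)^(2*k) / (2*k).factorial := by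
    intro k x hx
    have hx1 : |x| ≤ 1 := abs_le.mpr ⟨hx.1.le, hx.2⟩
    have hs0 : 0 ≤ Real.sqrt (1 - x^2) := Real.sqrt_nonneg _
    have hs1 : Real.sqrt (1 - x^2) ≤ 1 := by
      rw [Real.sqrt_le_one]
      nlinarith [sq_abs x, abs_nonneg x]
    have h1 : ‖F k x‖ = |2*t*x|^(2*k) / (2*k).factorial * Real.sqrt (1 - x^2) := by
      simp [hF, Real.norm_eq_abs, abs_mul, abs_div, abs_pow, abs_of_nonneg hs0, Nat.abs_cast]
    have ht : |2*t*x| ≤ 2*|t| := by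
      rw [abs_mul, abs_mul, abs_two]
      nlinarith [abs_nonneg t, abs_nonneg (2*t*x)]
    calc ‖F k x‖ = |2*t*x|^(2*k) / (2*k).factorial * Real.sqrt (1-x^2) := h1
      _ ≤ (2*|t|)^(2*k) / (2*k).factorial * 1 := by
          gcongr
      _ = (2*|t|)^(2*k) / (2*k).factorial := mul_one _
  -- integral norm bound
  have hIb : ∀ k, (∫ x in Set.Ioc (-1:ℝ) 1, ‖F k x‖) ≤ 2 * ((2*|t|)^(2*k) / (2*k).factorial) := by
    intro k
    have hmono : (∫ x in Set.Ioc (-1:ℝ) 1, ‖F k x‖) ≤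
        ∫ _x in Set.Ioc (-1:ℝ) 1, ((2*|t|)^(2*k) / (2*k).factorial) := by
      apply setIntegral_mono_on ((hInt k).norm) (integrableOn_const (by simp))
        measurableSet_Ioc
      exact hbd k
    have hconst : (∫ _x in Set.Ioc (-1:ℝ) 1, ((2*|t|)^(2*k) / (2*k).factorial)) =
        2 * ((2*|t|)^(2*k) / (2*k).factorial) := by
      rw [setIntegral_const, Real.volume_real_Ioc_of_le (by norm_num), smul_eq_mul]
      norm_num
    linarith
  have hsum : Summable (fun k => ∫ x in Set.Ioc (-1:ℝ) 1, ‖F k x‖) := by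
    apply Summable.of_nonneg_of_le
      (fun k => integral_nonneg (fun x => norm_nonneg _)) hIb
    have h1 : Summable (fun k : ℕ => (2*|t|)^(2*k) / (2*k).factorial) :=
      (Real.summable_pow_div_factorial (2*|t|)).comp_injective
        (fun a b h => by have : 2*a = 2*b := h; omega : Function.Injective (fun n : ℕ => 2*n))
    exact h1.mul_left 2
  have key : (∑' k, ∫ x in Set.Ioc (-1:ℝ) 1, F k x) =
      ∫ x in Set.Ioc (-1:ℝ) 1, (∑' k, F k x) :=
    integral_tsum_of_summable_integral_norm hInt hsum
  have hcos : ∀ x : ℝ, (∑' k, F k x) = Real.cos (2*t*x) * Real.sqrt (1 - x^2) := by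
    intro x
    rw [hF, tsum_mul_right, Real.cos_eq_tsum (2*t*x)]
  have hintk : ∀ k : ℕ, (∫ x in Set.Ioc (-1:ℝ) 1, F k x) =
      ((-1)^k * (2*t)^(2*k) / (2*k).factorial) *
        (π * (2*k).factorial / (2 * 4^k * k.factorial * (k+1).factorial)) := by
    intro k
    have hfe : F k = fun x => ((-1)^k * (2*t)^(2*k) / (2*k).factorial) *
        (x^(2*k) * Real.sqrt (1 - x^2)) := by
      funext x
      rw [hF]
      simp only
      rw [mul_pow (2*t) x (2*k)]
      ring
    rw [← intervalIntegral.integral_of_le (by norm_num : (-1:ℝ) ≤ 1), hfe,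
      intervalIntegral.integral_const_mul, moment k]
  have hterm : ∀ k : ℕ, (-1:ℝ)^k * t^(2*k) / (k.factorial * (k+1).factorial) =
      (2/π) * ∫ x in Set.Ioc (-1:ℝ) 1, F k x := by
    intro k
    rw [hintk k]
    have hf : (k.factorial : ℝ) ≠ 0 := Nat.cast_ne_zero.mpr k.factorial_ne_zero
    have hf1 : ((k+1).factorial : ℝ) ≠ 0 := Nat.cast_ne_zero.mpr (k+1).factorial_ne_zero
    have hf2 : (((2*k).factorial : ℝ)) ≠ 0 := Nat.cast_ne_zero.mpr (2*k).factorial_ne_zero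
    have h4 : (4:ℝ)^k ≠ 0 := by positivity
    have h2t : (2*t)^(2*k) = 4^k * t^(2*k) := by
      rw [mul_pow, pow_mul]
      norm_num
    rw [h2t]
    field_simp
  calc besselR t = ∑' k : ℕ, (-1:ℝ)^k * t^(2*k) / (k.factorial * (k+1).factorial) := rfl
    _ = ∑' k : ℕ, (2/π) * ∫ x in Set.Ioc (-1:ℝ) 1, F k x := by
        exact tsum_congr hterm
    _ = (2/π) * ∑' k : ℕ, ∫ x in Set.Ioc (-1:ℝ) 1, F k x := tsum_mul_left
    _ = (2/π) * ∫ x in Set.Ioc (-1:ℝ) 1, (∑' k, F k x) := by rw [key]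
    _ = (2/π) * ∫ x in Set.Ioc (-1:ℝ) 1, Real.cos (2*t*x) * Real.sqrt (1 - x^2) := by
        congr 1
        exact setIntegral_congr_fun measurableSet_Ioc (fun x _ => hcos x)
    _ = (2/π) * ∫ x in (-1:ℝ)..1, Real.cos (2*t*x) * Real.sqrt (1 - x^2) := by
        rw [intervalIntegral.integral_of_le (by norm_num : (-1:ℝ) ≤ 1)]

lemma tendsto_besselR : Tendsto besselR atTop (𝓝 0) := by
  set f : ℝ → ℂ := (Set.Ioc (-1:ℝ) 1).indicator (fun x => ((Real.sqrt (1 - x^2) : ℝ) : ℂ)) with hf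
  have hRL := Real.tendsto_integral_exp_smul_cocompact f
  have hre : Tendsto (fun w : ℝ => (∫ v : ℝ, 𝐞 (-(v * w)) • f v).re) (cocompact ℝ) (𝓝 0) := by
    have := (Complex.continuous_re.tendsto 0).comp hRL
    simpa [Function.comp_def] using this
  have hkey : ∀ w : ℝ, (∫ v : ℝ, 𝐞 (-(v * w)) • f v).re =
      ∫ x in (-1:ℝ)..1, Real.cos (2*π*(x*w)) * Real.sqrt (1 - x^2) := by
    intro w
    have h1 : (fun v : ℝ => 𝐞 (-(v * w)) • f v) =
        (Set.Ioc (-1:ℝ) 1).indicator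
          (fun v => 𝐞 (-(v * w)) • ((Real.sqrt (1 - v^2) : ℝ) : ℂ)) := by
      funext v
      by_cases hv : v ∈ Set.Ioc (-1:ℝ) 1
      · simp [hf, Set.indicator_of_mem hv]
      · simp [hf, Set.indicator_of_notMem hv]
    rw [h1, MeasureTheory.integral_indicator measurableSet_Ioc]
    have hgc : Continuous (fun v : ℝ => 𝐞 (-(v * w)) • ((Real.sqrt (1 - v^2) : ℝ) : ℂ)) := by
      apply Continuous.smul
      · exact continuous_subtype_val.comp (Real.continuous_fourierChar.comp (f := fun v : ℝ => -(v * w)) (by fun_prop))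
      · fun_prop
    have hgint : Integrable (fun v : ℝ => 𝐞 (-(v * w)) • ((Real.sqrt (1 - v^2) : ℝ) : ℂ))
        (volume.restrict (Set.Ioc (-1:ℝ) 1)) := hgc.integrableOn_Ioc
    have h2 := integral_re hgint
    simp only [RCLike.re_to_complex] at h2
    rw [← h2]
    rw [← intervalIntegral.integral_of_le (by norm_num : (-1:ℝ) ≤ 1)]
    apply intervalIntegral.integral_congr
    intro v _
    simp only [Circle.smul_def, Real.fourierChar_apply, smul_eq_mul, Complex.mul_re,
      Complex.ofReal_re, Complex.ofReal_im, Complex.exp_ofReal_mul_I_re,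
      Complex.exp_ofReal_mul_I_im, mul_zero, sub_zero, mul_neg, neg_neg, Real.cos_neg]
  have hcomp : Tendsto (fun t : ℝ => t / π) atTop (cocompact ℝ) := by
    rw [cocompact_eq_atBot_atTop]
    exact (Tendsto.atTop_div_const Real.pi_pos tendsto_id).mono_right le_sup_right
  have hcosint : Tendsto (fun t : ℝ => ∫ x in (-1:ℝ)..1,
      Real.cos (2*t*x) * Real.sqrt (1 - x^2)) atTop (𝓝 0) := by
    have h := hre.comp hcomp
    have heq : (fun t : ℝ => ∫ x in (-1:ℝ)..1, Real.cos (2*t*x) * Real.sqrt (1 - x^2)) =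
        (fun w : ℝ => (∫ v : ℝ, 𝐞 (-(v * w)) • f v).re) ∘ (fun t : ℝ => t / π) := by
      funext t
      rw [Function.comp_apply, hkey]
      apply intervalIntegral.integral_congr
      intro x _
      have hpi : (π:ℝ) ≠ 0 := Real.pi_ne_zero
      have harg : 2*π*(x*(t/π)) = 2*t*x := by field_simp
      simp only [harg]
    rw [heq]
    exact h
  have hb : besselR = fun t => (2/π) * ∫ x in (-1:ℝ)..1,
      Real.cos (2*t*x) * Real.sqrt (1 - x^2) := funext besselR_eq_integral
  rw [hb]
  have := hcosint.const_mul (2/π)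
  simpa using this

/-- `λ_D(t) = ((D·r(t)² + r(2t))² − 4·r(t)²)/((D+3)(D²−1))` for real parameter `D`. -/
noncomputable def lamD (D t : ℝ) : ℝ :=
  ((D * besselR t ^ 2 + besselR (2 * t)) ^ 2 - 4 * besselR t ^ 2) / ((D + 3) * (D ^ 2 - 1))

/-- In the long-time limit `λ_D(t) → 0`, and the channel coefficients
`α_D(t) = (1/(D+1) − λ_D(t))⁻¹` and `β_D(t) = (1/(D+1) + D·λ_D(t))⁻¹` both
converge to `D+1`: the Hamiltonian-driven channel converges to the
unitary-2-design channel. -/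
theorem channel_long_time_limit (D : ℤ) (hD : 2 ≤ D) :
    Tendsto (fun t : ℝ => lamD (D : ℝ) t) atTop (𝓝 0) ∧
    Tendsto (fun t : ℝ => (1 / ((D : ℝ) + 1) - lamD (D : ℝ) t)⁻¹) atTop (𝓝 ((D : ℝ) + 1)) ∧
    Tendsto (fun t : ℝ => (1 / ((D : ℝ) + 1) + (D : ℝ) * lamD (D : ℝ) t)⁻¹) atTop
      (𝓝 ((D : ℝ) + 1)) := by
  have hD' : (2:ℝ) ≤ (D:ℝ) := by exact_mod_cast hD
  have h1 : Tendsto besselR atTop (𝓝 0) := tendsto_besselR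
  have h2 : Tendsto (fun t : ℝ => besselR (2*t)) atTop (𝓝 0) := by
    apply h1.comp
    exact Tendsto.const_mul_atTop two_pos tendsto_id
  have hsq : Tendsto (fun t : ℝ => besselR t ^ 2) atTop (𝓝 0) := by
    have := h1.pow 2
    simpa using this
  have hnum : Tendsto (fun t : ℝ =>
      (((D:ℝ) * besselR t ^ 2 + besselR (2*t)) ^ 2 - 4 * besselR t ^ 2)) atTop (𝓝 0) := by
    have := (((tendsto_const_nhds (x := (D:ℝ)).mul hsq).add h2).pow 2).sub
      (tendsto_const_nhds (x := (4:ℝ)).mul hsq)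
    simpa using this
  have hl : Tendsto (fun t : ℝ => lamD (D:ℝ) t) atTop (𝓝 0) := by
    have := hnum.div_const (((D:ℝ) + 3) * ((D:ℝ) ^ 2 - 1))
    simpa [lamD] using this
  refine ⟨hl, ?_, ?_⟩
  · have hα : Tendsto (fun t : ℝ => 1/((D:ℝ)+1) - lamD (D:ℝ) t) atTop
        (𝓝 (1/((D:ℝ)+1) - 0)) := tendsto_const_nhds.sub hl
    have hne : 1/((D:ℝ)+1) - 0 ≠ 0 := by
      rw [sub_zero]
      positivity
    have := hα.inv₀ hne
    rw [sub_zero] at this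
    simpa [one_div] using this
  · have hβ : Tendsto (fun t : ℝ => 1/((D:ℝ)+1) + (D:ℝ) * lamD (D:ℝ) t) atTop
        (𝓝 (1/((D:ℝ)+1) + (D:ℝ) * 0)) := tendsto_const_nhds.add (tendsto_const_nhds.mul hl)
    have hne : 1/((D:ℝ)+1) + (D:ℝ) * 0 ≠ 0 := by
      rw [mul_zero, add_zero]
      positivity
    have := hβ.inv₀ hne
    rw [mul_zero, add_zero] at this
    simpa [one_div] using this
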